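/- The σ-CFDM sampler output converges to a barycenter: fix z ∈ R^D, barycenters c̄_1,...,c̄_{N^M} ∈ R^D and reals V_k, ū_k, σ ≥ 0 such that the quantity ‖z − c̄_k‖² + V_k + σū_k has a unique minimizer k*. Then lim_{S→∞} (S/(S−1))·Σ_k softmax(−(M S²/2)(‖z − ((S−1)/S)c̄_k‖² + ((S−1)/S)²V_k + σ((S−1)/S)ū_k))_k · ((S−1)/S)·c̄_k = c̄_{k*}. -/

import Mathlib

open Real BigOperators Filter

noncomputable def softmax {K : ℕ} (v : Fin K → ℝ) (k : Fin K) : ℝ :=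
  Real.exp (v k) / ∑ j, Real.exp (v j)

/-- Support of σ-CFDM samples: as the number of Euler steps `S → ∞`, the final-step output
converges to the barycenter `c̄ kstar` uniquely minimizing `‖z - c̄ k‖² + V k + σ ū k`. -/
theorem sigmaCFDM_sample_tendsto_barycenter {D N M : ℕ}
    (z : EuclideanSpace ℝ (Fin D)) (cbar : Fin (N ^ M) → EuclideanSpace ℝ (Fin D))
    (V ubar : Fin (N ^ M) → ℝ) (σ : ℝ) (hσ : 0 ≤ σ) (kstar : Fin (N ^ M))
    (hmin : ∀ k, k ≠ kstar →
      ‖z - cbar kstar‖ ^ 2 + V kstar + σ * ubar kstar < ‖z - cbar k‖ ^ 2 + V k + σ * ubar k) :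
    Filter.Tendsto (fun S : ℕ =>
        ((S : ℝ) / ((S : ℝ) - 1)) •
          ∑ k, softmax (fun k' => -((M : ℝ) * (S : ℝ) ^ 2 / 2) *
              (‖z - (((S : ℝ) - 1) / (S : ℝ)) • cbar k'‖ ^ 2
                + (((S : ℝ) - 1) / (S : ℝ)) ^ 2 * V k'
                + σ * (((S : ℝ) - 1) / (S : ℝ)) * ubar k')) k
            • ((((S : ℝ) - 1) / (S : ℝ)) • cbar k))
      Filter.atTop (nhds (cbar kstar)) := by
  classical
  set α : ℕ → ℝ := fun S => ((S : ℝ) - 1) / (S : ℝ) with hαdef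
  set v : ℕ → Fin (N ^ M) → ℝ := fun S k => -((M : ℝ) * (S : ℝ) ^ 2 / 2) *
      (‖z - α S • cbar k‖ ^ 2 + (α S) ^ 2 * V k + σ * (α S) * ubar k) with hvdef
  set F : ℕ → Fin (N ^ M) → ℝ := fun S k =>
      ‖z - α S • cbar k‖ ^ 2 + (α S) ^ 2 * V k + σ * (α S) * ubar k with hFdef
  -- α S → 1
  have hα : Tendsto α atTop (nhds 1) := by
    have h1 : Tendsto (fun S : ℕ => 1 - (S : ℝ)⁻¹) atTop (nhds 1) := by
      have := tendsto_inv_atTop_zero.comp (tendsto_natCast_atTop_atTop (R := ℝ))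
      simpa using tendsto_const_nhds.sub this
    refine h1.congr' ?_
    filter_upwards [eventually_ge_atTop 1] with S hS
    have hS0 : (S : ℝ) ≠ 0 := by positivity
    show 1 - (S : ℝ)⁻¹ = ((S : ℝ) - 1) / (S : ℝ)
    rw [sub_div, div_self hS0, one_div]
  -- F S k → the objective
  have hF : ∀ k, Tendsto (fun S => F S k) atTop
      (nhds (‖z - cbar k‖ ^ 2 + V k + σ * ubar k)) := by
    intro k
    have hc : Continuous (fun t : ℝ =>
        ‖z - t • cbar k‖ ^ 2 + t ^ 2 * V k + σ * t * ubar k) := by fun_prop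
    have := (hc.tendsto 1).comp hα
    simp only [one_smul, one_pow, one_mul, mul_one] at this
    exact this
  -- for k ≠ kstar, v S k - v S kstar → -∞
  have hg : ∀ k, k ≠ kstar → Tendsto (fun S => v S k - v S kstar) atTop atBot := by
    intro k hk
    have hM : 1 ≤ M := by
      by_contra h
      have hM0 : M = 0 := by omega
      have h1 : N ^ M = 1 := by simp [hM0]
      have hk1 : k.1 < 1 := h1 ▸ k.2
      have hk2 : kstar.1 < 1 := h1 ▸ kstar.2
      exact hk (Fin.ext (by omega))
    have hβ : Tendsto (fun S : ℕ => (M : ℝ) * (S : ℝ) ^ 2 / 2) atTop atTop := by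
      have h1 : Tendsto (fun S : ℕ => (S : ℝ) ^ 2) atTop atTop :=
        (tendsto_pow_atTop (by norm_num)).comp (tendsto_natCast_atTop_atTop (R := ℝ))
      have h2 : (0 : ℝ) < (M : ℝ) := by exact_mod_cast hM
      exact (h1.const_mul_atTop h2).atTop_div_const (by norm_num)
    have hdiff : Tendsto (fun S => F S kstar - F S k) atTop
        (nhds ((‖z - cbar kstar‖ ^ 2 + V kstar + σ * ubar kstar)
          - (‖z - cbar k‖ ^ 2 + V k + σ * ubar k))) := (hF kstar).sub (hF k)
    have hneg : (‖z - cbar kstar‖ ^ 2 + V kstar + σ * ubar kstar)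
        - (‖z - cbar k‖ ^ 2 + V k + σ * ubar k) < 0 := by
      have := hmin k hk; linarith
    have hmul := hβ.atTop_mul_neg hneg hdiff
    refine hmul.congr fun S => ?_
    simp only [hvdef, hFdef]
    ring
  -- numerators of the shifted softmax
  have hnum : ∀ k, Tendsto (fun S => Real.exp (v S k - v S kstar)) atTop
      (nhds (if k = kstar then 1 else 0)) := by
    intro k
    by_cases hk : k = kstar
    · subst hk; simp
    · simp only [hk, if_neg]
      exact Real.tendsto_exp_atBot.comp (hg k hk)
  have hden : Tendsto (fun S => ∑ j, Real.exp (v S j - v S kstar)) atTop (nhds 1) := by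
    have := tendsto_finset_sum Finset.univ (fun j _ => hnum j)
    simpa [Finset.sum_ite_eq'] using this
  -- softmax rewriting
  have hsm : ∀ S k, softmax (v S) k
      = Real.exp (v S k - v S kstar) / ∑ j, Real.exp (v S j - v S kstar) := by
    intro S k
    have hpos : (0 : ℝ) < ∑ j, Real.exp (v S j) :=
      Finset.sum_pos (fun j _ => Real.exp_pos _) ⟨kstar, Finset.mem_univ _⟩
    simp only [softmax, Real.exp_sub, ← Finset.sum_div]
    rw [div_div_div_cancel_right₀]
    exact Real.exp_ne_zero _
  -- weights converge
  have hw : ∀ k, Tendsto (fun S => softmax (v S) k) atTop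
      (nhds (if k = kstar then 1 else 0)) := by
    intro k
    have := (hnum k).div hden one_ne_zero
    rw [div_one] at this
    exact this.congr fun S => (hsm S k).symm
  -- the unweighted sum converges
  have hsum : Tendsto (fun S => ∑ k, softmax (v S) k • cbar k) atTop
      (nhds (cbar kstar)) := by
    have := tendsto_finset_sum Finset.univ (fun k _ => (hw k).smul_const (cbar k))
    simpa [ite_smul, Finset.sum_ite_eq'] using this
  -- eventual equality with the stated function
  refine hsum.congr' ?_
  filter_upwards [eventually_ge_atTop 2] with S hS
  have hS0 : (S : ℝ) ≠ 0 := by positivity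
  have hS1 : (S : ℝ) - 1 ≠ 0 := by
    have : (2 : ℝ) ≤ (S : ℝ) := by exact_mod_cast hS
    intro h; linarith
  have hone : (S : ℝ) / ((S : ℝ) - 1) * α S = 1 := by
    show (S : ℝ) / ((S : ℝ) - 1) * (((S : ℝ) - 1) / (S : ℝ)) = 1
    field_simp
  have hone' : (S : ℝ) / ((S : ℝ) - 1) * (((S : ℝ) - 1) / (S : ℝ)) = 1 := by
    field_simp
  rw [Finset.smul_sum]
  refine Finset.sum_congr rfl fun k _ => ?_
  rw [smul_comm, smul_smul, smul_smul, mul_assoc, hone', mul_one]
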